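/- For every real number a ≠ 0, the limit lim_{R→∞} ∫₁^R (e^{iat}/t) dt exists in ℂ and is nonzero. -/

import Mathlib

open MeasureTheory Real Filter Set

namespace SiciAux

noncomputable def f (a t : ℝ) : ℂ := Complex.exp (Complex.I * a * t)

lemma abs_f (a t : ℝ) : ‖f a t‖ = 1 := by
  simp [f, Complex.norm_exp, Complex.mul_re, Complex.mul_im]

lemma cont_f (a : ℝ) : Continuous (f a) := by
  unfold f; fun_prop

lemma c_ne (a : ℝ) (ha : a ≠ 0) : (Complex.I * a) ≠ 0 :=
  mul_ne_zero Complex.I_ne_zero (by exact_mod_cast ha)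

/-- integrability of `f a t / t ^ 2` on `Ioi 1` -/
lemma rpow_neg_two {t : ℝ} (ht : 0 < t) : t ^ (-2 : ℝ) = (t ^ 2)⁻¹ := by
  rw [Real.rpow_neg ht.le, show (2:ℝ) = ((2:ℕ):ℝ) by norm_num, Real.rpow_natCast]

lemma intJ (a : ℝ) : IntegrableOn (fun t : ℝ => f a t / (t : ℂ) ^ 2) (Ioi 1) := by
  have hbase : IntegrableOn (fun t : ℝ => t ^ (-2 : ℝ)) (Ioi 1) :=
    integrableOn_Ioi_rpow_of_lt (by norm_num) one_pos
  apply hbase.integrable.mono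
  · apply Measurable.aestronglyMeasurable
    apply Measurable.div
    · exact (cont_f a).measurable
    · exact ((Complex.continuous_ofReal.pow 2).measurable)
  · filter_upwards [ae_restrict_mem measurableSet_Ioi] with t ht
    have ht0 : (0 : ℝ) < t := lt_trans one_pos ht
    have h1 : ‖f a t / (t : ℂ) ^ 2‖ = (t ^ 2)⁻¹ := by
      rw [norm_div, abs_f, norm_pow,
        Complex.norm_real, Real.norm_eq_abs, abs_of_pos ht0, one_div]
    rw [h1, Real.norm_eq_abs, rpow_neg_two ht0, abs_of_nonneg (by positivity)]

lemma int_inv_sq : IntegrableOn (fun t : ℝ => (t ^ 2)⁻¹) (Ioi 1) := by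
  apply (integrableOn_Ioi_rpow_of_lt (by norm_num : (-2:ℝ) < -1) one_pos).congr_fun
  · exact fun t ht => rpow_neg_two (lt_trans one_pos ht)
  · exact measurableSet_Ioi

lemma int_inv_sq_val : ∫ t in Ioi (1:ℝ), (t ^ 2)⁻¹ = 1 := by
  have h := integral_Ioi_rpow_of_lt (by norm_num : (-2:ℝ) < -1) (c := 1) one_pos
  have h2 : ∫ t in Ioi (1:ℝ), (t ^ 2)⁻¹ = ∫ t in Ioi (1:ℝ), t ^ (-2:ℝ) := by
    apply setIntegral_congr_fun measurableSet_Ioi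
    exact fun t ht => (rpow_neg_two (lt_trans one_pos ht)).symm
  rw [h2, h]
  norm_num

/-- the set where the phase hits a fixed value is countable -/
lemma countable_S (a : ℝ) (ha : a ≠ 0) (u : ℂ) : Set.Countable {t : ℝ | f a t = u} := by
  rcases eq_empty_or_nonempty {t : ℝ | f a t = u} with h | ⟨t₀, ht₀⟩
  · simp [h]
  · apply Set.Countable.mono ?_ (Set.countable_range (fun n : ℤ => t₀ + 2 * π * n / a))
    intro t ht
    have h1 : f a t = f a t₀ := by rw [ht, ht₀]
    rw [f, f, Complex.exp_eq_exp_iff_exists_int] at h1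
    obtain ⟨n, hn⟩ := h1
    refine ⟨n, ?_⟩
    have him := congrArg Complex.im hn
    norm_num [Complex.add_im, Complex.mul_im, Complex.mul_re, Complex.I_re, Complex.I_im,
      Complex.ofReal_re, Complex.ofReal_im, Complex.intCast_re, Complex.intCast_im] at him
    field_simp
    nlinarith [him]

lemma normJ_lt (a : ℝ) (ha : a ≠ 0) :
    ‖∫ t in Ioi (1:ℝ), f a t / (t : ℂ) ^ 2‖ < 1 := by
  set J := ∫ t in Ioi (1:ℝ), f a t / (t : ℂ) ^ 2 with hJ
  rcases eq_or_ne J 0 with h0 | h0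
  · rw [h0]; norm_num
  set u : ℂ := J / ‖J‖ with hu
  have habsu : ‖u‖ = 1 := by
    rw [hu, norm_div, Complex.norm_real, norm_norm]
    exact div_self (norm_ne_zero_iff.mpr h0)
  have hcuJ : (starRingEnd ℂ) u * J = (‖J‖ : ℂ) := by
    rw [hu, map_div₀, Complex.conj_ofReal]
    rw [div_mul_eq_mul_div, mul_comm, Complex.mul_conj, Complex.normSq_eq_norm_sq]
    rw [div_eq_iff (by exact_mod_cast norm_ne_zero_iff.mpr h0)]
    norm_cast
    ring
  set g : ℝ → ℝ := fun t => (t ^ 2)⁻¹ - ((starRingEnd ℂ) u * (f a t / (t : ℂ) ^ 2)).re with hg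
  have key : ∀ t : ℝ, ((starRingEnd ℂ) u * (f a t / (t : ℂ) ^ 2)).re ≤ (t ^ 2)⁻¹ := by
    intro t
    calc ((starRingEnd ℂ) u * (f a t / (t : ℂ) ^ 2)).re
        ≤ ‖(starRingEnd ℂ) u * (f a t / (t : ℂ) ^ 2)‖ := Complex.re_le_norm _
      _ = (t ^ 2)⁻¹ := by
          rw [norm_mul, Complex.norm_conj, habsu, one_mul, norm_div, abs_f, norm_pow,
            Complex.norm_real, Real.norm_eq_abs, one_div, ← abs_pow, abs_of_nonneg (by positivity)]
  have hg0 : 0 ≤ g := fun t => sub_nonneg.2 (key t)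
  have hgint : Integrable g (volume.restrict (Ioi 1)) := by
    apply Integrable.sub int_inv_sq.integrable
    have := ((intJ a).integrable.const_mul ((starRingEnd ℂ) u)).re
    simpa [RCLike.re_to_complex] using this
  have hpos : 0 < ∫ t in Ioi (1:ℝ), g t := by
    rw [integral_pos_iff_support_of_nonneg hg0 hgint]
    set S := {t : ℝ | f a t = u} with hS
    have hSc : (volume : Measure ℝ) S = 0 :=
      Set.Countable.measure_zero (countable_S a ha u) _
    have hsub : Ioi (1:ℝ) \ S ⊆ Function.support g := by
      intro t ⟨ht1, htS⟩
      intro hgt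
      apply htS
      have ht0 : (0:ℝ) < t := lt_trans one_pos ht1
      have h1 : ((starRingEnd ℂ) u * (f a t / (t : ℂ) ^ 2)).re = (t ^ 2)⁻¹ := by
        have := sub_eq_zero.mp hgt
        linarith [this]
      set z := (starRingEnd ℂ) u * f a t with hz
      have habsz : ‖z‖ = 1 := by
        rw [hz, norm_mul, Complex.norm_conj, habsu, abs_f, one_mul]
      have hre : z.re = 1 := by
        have hcast : (starRingEnd ℂ) u * (f a t / (t : ℂ) ^ 2) = z / ((t ^ 2 : ℝ) : ℂ) := by
          rw [hz]; push_cast; ring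
        rw [hcast, Complex.div_ofReal_re] at h1
        have ht2 : (0:ℝ) < t ^ 2 := by positivity
        field_simp at h1
        linarith [h1]
      have hz1 : z = 1 := by
        have hnsq := Complex.normSq_eq_norm_sq z
        rw [habsz] at hnsq
        rw [Complex.normSq_apply, hre] at hnsq
        have him : z.im = 0 := by nlinarith [sq_nonneg z.im]
        exact Complex.ext (by simp [hre]) (by simp [him])
      -- z = conj u * f a t = 1  →  f a t = u
      have : f a t = u := by
        have h2 : u * ((starRingEnd ℂ) u * f a t) = u * 1 := by rw [← hz, hz1]
        rw [mul_one, ← mul_assoc, Complex.mul_conj, Complex.normSq_eq_norm_sq, habsu] at h2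
        simpa using h2
      exact this
    calc (0:ENNReal) < volume (Ioi (1:ℝ) \ S) := by
          rw [measure_diff_null hSc]; simp
      _ ≤ (volume.restrict (Ioi 1)) (Function.support g) := by
          rw [Measure.restrict_apply₀']
          · exact measure_mono (fun t ht => ⟨hsub ht, ht.1⟩)
          · exact measurableSet_Ioi.nullMeasurableSet
  have hsplit : ∫ t in Ioi (1:ℝ), g t
      = 1 - ((starRingEnd ℂ) u * J).re := by
    rw [hg]
    rw [integral_sub int_inv_sq.integrable (by
      have := ((intJ a).integrable.const_mul ((starRingEnd ℂ) u)).re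
      simpa [RCLike.re_to_complex] using this)]
    rw [int_inv_sq_val]
    congr 1
    have hint : Integrable (fun t : ℝ => (starRingEnd ℂ) u * (f a t / (t:ℂ) ^ 2))
        (volume.restrict (Ioi 1)) := (intJ a).integrable.const_mul _
    have hre := integral_re (μ := volume.restrict (Ioi 1)) hint
    simp only [RCLike.re_to_complex] at hre
    rw [hre, MeasureTheory.integral_const_mul, ← hJ]
  rw [hsplit, hcuJ] at hpos
  have : ((‖J‖:ℝ) : ℂ).re = ‖J‖ := Complex.ofReal_re _
  rw [this] at hpos
  linarith

lemma deriv_F (a : ℝ) (ha : a ≠ 0) {t : ℝ} (ht : 0 < t) :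
    HasDerivAt (fun s : ℝ => f a s / (Complex.I * a * s))
      (f a t / t - f a t / (Complex.I * a * (t : ℂ) ^ 2)) t := by
  have hc := c_ne a ha
  have ht' : (t : ℂ) ≠ 0 := by exact_mod_cast ht.ne'
  have hr : HasDerivAt (fun s : ℝ => (s : ℂ)) 1 t := by
    simpa using (hasDerivAt_id t).ofReal_comp
  have h1 : HasDerivAt (fun s : ℝ => (Complex.I * a * s : ℂ)) (Complex.I * a) t := by
    simpa using hr.const_mul (Complex.I * (a : ℂ))
  have hexp : HasDerivAt (fun s : ℝ => Complex.exp (Complex.I * a * s))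
      (Complex.exp (Complex.I * a * t) * (Complex.I * a)) t := h1.cexp
  have hne : (Complex.I * a * t : ℂ) ≠ 0 := mul_ne_zero hc ht'
  have hinv : HasDerivAt (fun s : ℝ => (Complex.I * a * s : ℂ)⁻¹)
      (-((Complex.I * a * t : ℂ) ^ 2)⁻¹ * (Complex.I * a)) t :=
    (hasDerivAt_inv hne).comp t h1
  have hmul := hexp.mul hinv
  simp only [f, div_eq_mul_inv]
  refine hmul.congr_deriv ?_
  have ha' : (a : ℂ) ≠ 0 := by exact_mod_cast ha
  field_simp
  ring

lemma ftc (a : ℝ) (ha : a ≠ 0) {R : ℝ} (hR : 1 ≤ R) :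
    ∫ t in (1:ℝ)..R, f a t / t
      = f a R / (Complex.I * a * R) - f a 1 / (Complex.I * a)
        + ∫ t in (1:ℝ)..R, f a t / (Complex.I * a * (t : ℂ) ^ 2) := by
  have huIcc : uIcc (1:ℝ) R = Icc 1 R := uIcc_of_le hR
  have hpos : ∀ t ∈ uIcc (1:ℝ) R, (0:ℝ) < t := by
    rw [huIcc]; intro t ht; linarith [ht.1]
  have hcont1 : ContinuousOn (fun t : ℝ => f a t / t) (uIcc 1 R) :=
    ((cont_f a).continuousOn).div (Complex.continuous_ofReal.continuousOn)
      (fun t ht => by exact_mod_cast (hpos t ht).ne')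
  have hcont2 : ContinuousOn (fun t : ℝ => f a t / (Complex.I * a * (t:ℂ) ^ 2))
      (uIcc 1 R) := by
    apply ((cont_f a).continuousOn).div (by fun_prop)
    exact fun t ht => mul_ne_zero (c_ne a ha)
      (pow_ne_zero 2 (by exact_mod_cast (hpos t ht).ne'))
  have hderiv : ∀ t ∈ uIcc (1:ℝ) R,
      HasDerivAt (fun s : ℝ => f a s / (Complex.I * a * s))
        (f a t / t - f a t / (Complex.I * a * (t:ℂ) ^ 2)) t :=
    fun t ht => deriv_F a ha (hpos t ht)
  have hii : IntervalIntegrable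
      (fun t : ℝ => f a t / t - f a t / (Complex.I * a * (t:ℂ) ^ 2)) volume 1 R :=
    (hcont1.sub hcont2).intervalIntegrable
  have h := intervalIntegral.integral_eq_sub_of_hasDerivAt hderiv hii
  rw [intervalIntegral.integral_sub hcont1.intervalIntegrable
    hcont2.intervalIntegrable] at h
  have h2 := eq_add_of_sub_eq h
  rw [h2]
  push_cast
  ring

end SiciAux

open SiciAux

/-- The Nielsen (sici) spiral never passes through the origin: for `a ≠ 0`,
the improper integral `∫₁^∞ e^{iat}/t dt` converges to a nonzero limit. -/
theorem stmt_10 (a : ℝ) (ha : a ≠ 0) :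
    ∃ L : ℂ, L ≠ 0 ∧
      Tendsto (fun R : ℝ => ∫ t in (1:ℝ)..R, Complex.exp (Complex.I * a * t) / t)
        atTop (nhds L) := by
  have hc := c_ne a ha
  set J := ∫ t in Ioi (1:ℝ), f a t / (t : ℂ) ^ 2 with hJ
  refine ⟨(Complex.I * a)⁻¹ * (J - f a 1), ?_, ?_⟩
  · intro h
    rcases mul_eq_zero.mp h with h1 | h1
    · exact hc (inv_eq_zero.mp h1)
    · have hJ1 : J = f a 1 := sub_eq_zero.mp h1
      have hlt : ‖J‖ < 1 := normJ_lt a ha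
      rw [hJ1, abs_f] at hlt
      exact lt_irrefl 1 hlt
  · have heq : (fun t : ℝ => f a t / (Complex.I * a * (t:ℂ) ^ 2))
        = fun t : ℝ => (Complex.I * a)⁻¹ * (f a t / (t:ℂ) ^ 2) := by
      funext t
      rw [mul_comm (Complex.I * (a:ℂ)), ← div_div, div_eq_mul_inv (f a t / _), mul_comm]
    have hInt2 : IntegrableOn (fun t : ℝ => f a t / (Complex.I * a * (t:ℂ) ^ 2)) (Ioi 1) := by
      rw [heq]; exact (intJ a).const_mul _
    have T2 : Tendsto (fun R : ℝ => ∫ t in (1:ℝ)..R, f a t / (Complex.I * a * (t:ℂ) ^ 2))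
        atTop (nhds (∫ t in Ioi (1:ℝ), f a t / (Complex.I * a * (t:ℂ) ^ 2))) :=
      intervalIntegral_tendsto_integral_Ioi 1 hInt2 tendsto_id
    have hval : (∫ t in Ioi (1:ℝ), f a t / (Complex.I * a * (t:ℂ) ^ 2))
        = (Complex.I * a)⁻¹ * J := by
      rw [heq, MeasureTheory.integral_const_mul, hJ]
    rw [hval] at T2
    have T1 : Tendsto (fun R : ℝ => f a R / (Complex.I * a * R)) atTop (nhds 0) := by
      apply squeeze_zero_norm' (a := fun R : ℝ => |a|⁻¹ * R⁻¹)
      · filter_upwards [eventually_ge_atTop (1:ℝ)] with R hR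
        have hR0 : (0:ℝ) < R := lt_of_lt_of_le one_pos hR
        have : ‖f a R / (Complex.I * a * R)‖ = |a|⁻¹ * R⁻¹ := by
          rw [norm_div, abs_f, norm_mul, norm_mul,
            Complex.norm_I, Complex.norm_real, Complex.norm_real, Real.norm_eq_abs, Real.norm_eq_abs, one_mul, one_div,
            abs_of_pos hR0, mul_inv]
        rw [this]
      · have := tendsto_inv_atTop_zero (𝕜 := ℝ) |>.const_mul (|a|⁻¹)
        simpa using this
    have Tsum : Tendsto
        (fun R : ℝ => f a R / (Complex.I * a * R) - f a 1 / (Complex.I * a)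
          + ∫ t in (1:ℝ)..R, f a t / (Complex.I * a * (t:ℂ) ^ 2)) atTop
        (nhds (0 - f a 1 / (Complex.I * a) + (Complex.I * a)⁻¹ * J)) :=
      (T1.sub tendsto_const_nhds).add T2
    have hlim : (0 : ℂ) - f a 1 / (Complex.I * a) + (Complex.I * a)⁻¹ * J
        = (Complex.I * a)⁻¹ * (J - f a 1) := by
      field_simp
      ring
    rw [hlim] at Tsum
    apply Tsum.congr'
    filter_upwards [eventually_ge_atTop (1:ℝ)] with R hR
    exact (ftc a ha hR).symm
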